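/- arXiv:2405.04193 — 2 statements merged into one kernel-verified Lean document; each statement's English description precedes it below -/
import Mathlib

section
/- (Theorem 1.) Let π^S be a positive probability vector on cells i : Fin T → Fin r that is permutation-invariant (π^S(i∘σ) = π^S(i) for all permutations σ), and let μ₁, …, μ_T ∈ ℝ. Consider the feasible set of positive probability vectors π satisfying (c4): ∑_{j ∈ A(i)} π(j) = ∑_{j ∈ A(i)} π^S(j) for every cell i, and (c5): ∑_{cells i} u(i_t) π(i) = μ_t for t = 1, …, T. Suppose π* is a member of the feasible set for which there exist β : Fin T → ℝ and a permutation-invariant function ψ on cells such that F(π*(i)/π^S(i)) = ∑_{t=1}^T β_t u(i_t) + ψ(i) for all cells i. Then I(π* : π^S) ≤ I(π : π^S) for every π in the feasible set; i.e., the minimum of I(π : π^S) over the feasible set is attained at π*. -/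
/-- The orbit `A(i)` of a cell `i : Fin T → Fin r` under the action of the
symmetric group on `Fin T` permuting coordinates (`σ · i = i ∘ σ`). -/
def cellOrbit (r T : ℕ) (i : Fin T → Fin r) : Finset (Fin T → Fin r) :=
  Finset.univ.filter (fun j => ∃ σ : Equiv.Perm (Fin T), j = i ∘ σ)

lemma mem_cellOrbit_iff {r T : ℕ} {i j : Fin T → Fin r} :
    j ∈ cellOrbit r T i ↔ ∃ σ : Equiv.Perm (Fin T), j = i ∘ σ := by
  simp [cellOrbit]

lemma self_mem_cellOrbit {r T : ℕ} (i : Fin T → Fin r) : i ∈ cellOrbit r T i :=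
  mem_cellOrbit_iff.mpr ⟨Equiv.refl _, rfl⟩

lemma cellOrbit_eq_of_mem {r T : ℕ} {i j : Fin T → Fin r}
    (h : j ∈ cellOrbit r T i) : cellOrbit r T j = cellOrbit r T i := by
  obtain ⟨σ, rfl⟩ := mem_cellOrbit_iff.mp h
  ext k
  simp only [mem_cellOrbit_iff]
  constructor
  · rintro ⟨τ, rfl⟩
    exact ⟨τ.trans σ, rfl⟩
  · rintro ⟨τ, rfl⟩
    refine ⟨τ.trans σ.symm, ?_⟩
    funext x
    simp

/-- If `h` is permutation-invariant and `d` sums to zero on every orbit,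
then `∑ i, h i * d i = 0`. -/
lemma sum_mul_orbit_zero {r T : ℕ} (h d : (Fin T → Fin r) → ℝ)
    (hinv : ∀ (i : Fin T → Fin r) (σ : Equiv.Perm (Fin T)), h (i ∘ σ) = h i)
    (hd : ∀ i, ∑ j ∈ cellOrbit r T i, d j = 0) :
    ∑ i, h i * d i = 0 := by
  classical
  have hmaps : ∀ x ∈ (Finset.univ : Finset (Fin T → Fin r)),
      cellOrbit r T x ∈ Finset.univ.image (fun i => cellOrbit r T i) := by
    intro x _
    exact Finset.mem_image_of_mem _ (Finset.mem_univ x)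
  rw [← Finset.sum_fiberwise_of_maps_to hmaps (fun i => h i * d i)]
  refine Finset.sum_eq_zero ?_
  intro s hs
  obtain ⟨i₀, _, rfl⟩ := Finset.mem_image.mp hs
  have hfib : Finset.univ.filter (fun x => cellOrbit r T x = cellOrbit r T i₀)
      = cellOrbit r T i₀ := by
    ext x
    simp only [Finset.mem_filter, Finset.mem_univ, true_and]
    constructor
    · intro hx
      rw [← hx]; exact self_mem_cellOrbit x
    · intro hx
      exact cellOrbit_eq_of_mem hx
  rw [hfib]
  have hconst : ∀ x ∈ cellOrbit r T i₀, h x * d x = h i₀ * d x := by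
    intro x hx
    obtain ⟨σ, rfl⟩ := mem_cellOrbit_iff.mp hx
    rw [hinv]
  rw [Finset.sum_congr rfl hconst, ← Finset.mul_sum, hd, mul_zero]

/-- Tangent line inequality for a convex function on `Ioi 0`. -/
lemma tangent_le {f : ℝ → ℝ} (hconv : ConvexOn ℝ (Set.Ioi 0) f)
    (hdiff : ∀ x ∈ Set.Ioi (0 : ℝ), DifferentiableAt ℝ f x)
    {x y : ℝ} (hx : x ∈ Set.Ioi (0:ℝ)) (hy : y ∈ Set.Ioi (0:ℝ)) :
    f x + deriv f x * (y - x) ≤ f y := by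
  rcases lt_trichotomy x y with h | rfl | h
  · have hs := hconv.deriv_le_slope hx hy h (hdiff x hx)
    rw [slope_def_field] at hs
    have hxy : (0:ℝ) < y - x := sub_pos.2 h
    rw [le_div_iff₀ hxy] at hs
    linarith
  · simp
  · have hs := hconv.slope_le_deriv hy hx h (hdiff x hx)
    rw [slope_def_field] at hs
    have hxy : (0:ℝ) < x - y := sub_pos.2 h
    rw [div_le_iff₀ hxy] at hs
    nlinarith

/-- Theorem 1: if a feasible `π*` (satisfying the orbit-sum restrictions (c4) and the
marginal moment restrictions (c5)) has the form
`F(π*(i)/π^S(i)) = ∑_t β_t u(i_t) + ψ(i)` for `F = f′` and a permutation-invariant `ψ`,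
then `π*` minimizes the `f`-divergence `I(π : π^S)` over the feasible set. -/
theorem fdivergence_min_general_T
    (r T : ℕ) (hr : 2 ≤ r) (hT : 2 ≤ T)
    (u : Fin r → ℝ) (humono : Monotone u)
    (hune : u ⟨0, by omega⟩ < u ⟨r - 1, by omega⟩)
    (f : ℝ → ℝ) (hconv : StrictConvexOn ℝ (Set.Ioi 0) f)
    (hdiff : ∀ x ∈ Set.Ioi (0 : ℝ), DifferentiableAt ℝ f x) (hf1 : f 1 = 0)
    (F : ℝ → ℝ) (hF : F = deriv f)
    (piS : (Fin T → Fin r) → ℝ)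
    (hpiSpos : ∀ i, 0 < piS i) (hpiSsum : ∑ i, piS i = 1)
    (hpiSinv : ∀ (i : Fin T → Fin r) (σ : Equiv.Perm (Fin T)), piS (i ∘ σ) = piS i)
    (μ : Fin T → ℝ)
    (πstar : (Fin T → Fin r) → ℝ)
    -- π* belongs to the feasible set:
    (hstarpos : ∀ i, 0 < πstar i) (hstarsum : ∑ i, πstar i = 1)
    (hstarc4 : ∀ i, ∑ j ∈ cellOrbit r T i, πstar j = ∑ j ∈ cellOrbit r T i, piS j)
    (hstarc5 : ∀ t : Fin T, ∑ i, u (i t) * πstar i = μ t)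
    -- π* has the stated form:
    (β : Fin T → ℝ) (ψ : (Fin T → Fin r) → ℝ)
    (hψ : ∀ (i : Fin T → Fin r) (σ : Equiv.Perm (Fin T)), ψ (i ∘ σ) = ψ i)
    (hform : ∀ i : Fin T → Fin r,
      F (πstar i / piS i) = (∑ t, β t * u (i t)) + ψ i) :
    -- then π* minimizes I(π : π^S) over the feasible set
    ∀ π : (Fin T → Fin r) → ℝ,
      (∀ i, 0 < π i) → (∑ i, π i = 1) →
      (∀ i, ∑ j ∈ cellOrbit r T i, π j = ∑ j ∈ cellOrbit r T i, piS j) →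
      (∀ t : Fin T, ∑ i, u (i t) * π i = μ t) →
      (∑ i, piS i * f (πstar i / piS i)) ≤ ∑ i, piS i * f (π i / piS i) := by
  intro π hpos hsum hc4 hc5
  set d : (Fin T → Fin r) → ℝ := fun i => π i - πstar i with hd_def
  -- pointwise tangent inequality
  have key : ∀ i, piS i * f (πstar i / piS i) + F (πstar i / piS i) * d i
      ≤ piS i * f (π i / piS i) := by
    intro i
    have hpS := hpiSpos i
    have hx : πstar i / piS i ∈ Set.Ioi (0:ℝ) := div_pos (hstarpos i) hpS
    have hy : π i / piS i ∈ Set.Ioi (0:ℝ) := div_pos (hpos i) hpS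
    have ht := tangent_le hconv.convexOn hdiff hx hy
    have hmul : piS i * (f (πstar i / piS i) + deriv f (πstar i / piS i) *
        (π i / piS i - πstar i / piS i)) ≤ piS i * f (π i / piS i) :=
      mul_le_mul_of_nonneg_left ht hpS.le
    have hrw : piS i * (π i / piS i - πstar i / piS i) = d i := by
      field_simp [hd_def]
      rfl
    rw [hF]
    calc piS i * f (πstar i / piS i) + deriv f (πstar i / piS i) * d i
        = piS i * (f (πstar i / piS i) + deriv f (πstar i / piS i) *
            (π i / piS i - πstar i / piS i)) := by rw [← hrw]; ring
      _ ≤ piS i * f (π i / piS i) := hmul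
  have hsum_le : ∑ i, (piS i * f (πstar i / piS i) + F (πstar i / piS i) * d i)
      ≤ ∑ i, piS i * f (π i / piS i) := Finset.sum_le_sum fun i _ => key i
  rw [Finset.sum_add_distrib] at hsum_le
  -- the correction term vanishes
  have hzero : ∑ i, F (πstar i / piS i) * d i = 0 := by
    have hsplit : ∀ i : Fin T → Fin r, F (πstar i / piS i) * d i
        = (∑ t, β t * (u (i t) * d i)) + ψ i * d i := by
      intro i
      rw [hform i, add_mul, Finset.sum_mul]
      ring_nf
      congr 1
      · exact Finset.sum_congr rfl fun t _ => by ring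
    rw [Finset.sum_congr rfl fun i _ => hsplit i, Finset.sum_add_distrib]
    have h1 : ∑ i, ∑ t, β t * (u (i t) * d i) = 0 := by
      rw [Finset.sum_comm]
      refine Finset.sum_eq_zero fun t _ => ?_
      rw [← Finset.mul_sum]
      have : ∑ i, u (i t) * d i = 0 := by
        have : ∑ i, u (i t) * d i
            = (∑ i, u (i t) * π i) - ∑ i, u (i t) * πstar i := by
          rw [← Finset.sum_sub_distrib]
          exact Finset.sum_congr rfl fun i _ => by simp [hd_def]; ring
        rw [this, hc5 t, hstarc5 t, sub_self]
      rw [this, mul_zero]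
    have h2 : ∑ i, ψ i * d i = 0 := by
      refine sum_mul_orbit_zero ψ d hψ fun i => ?_
      have : ∑ j ∈ cellOrbit r T i, d j
          = (∑ j ∈ cellOrbit r T i, π j) - ∑ j ∈ cellOrbit r T i, πstar j := by
        rw [← Finset.sum_sub_distrib]
      rw [this, hc4 i, hstarc4 i, sub_self]
    rw [h1, h2, add_zero]
  rw [hzero, add_zero] at hsum_le
  exact hsum_le
end

section
/- Let T = 3 and let π be a positive probability vector on cells (i,j,k) ∈ (Fin r)³ satisfying complete symmetry. Assume f is twice differentiable on (0,∞) with F = f′. Let J denote the Jacobian matrix at π of the map G defined by G(π)(i,j,k) = F(π(i,j,k)/π^S(i,j,k)) (π^S the orbit average), let Σ(π) = D(π) − π πᵀ be the multinomial covariance matrix (D(π) the diagonal matrix with entries π), and let W be the 2 × r³ matrix whose rows are x₁ and x₂, where x₁(i,j,k) = u(i) − u(k) and x₂(i,j,k) = u(j) − u(k). Let S(X) be the linear span in ℝ^{r³} of x₁, x₂, and the orbit indicator vectors e_O (e_O(i,j,k) = 1 if (i,j,k) lies in the orbit O and 0 otherwise). Then for every vector v ∈ ℝ^{r³} orthogonal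 to S(X), one has vᵀ J Σ(π) Wᵀ = 0; i.e., under the complete symmetry model H₁(π) Σ(π) H₂ᵀ(π) is the zero matrix. -/
/-- The orbit `A((i,j,k))` of a cell of an `r³` table: all coordinate permutations. -/
def A3 {r : ℕ} (c : Fin r × Fin r × Fin r) : Finset (Fin r × Fin r × Fin r) :=
  {(c.1, c.2.1, c.2.2), (c.1, c.2.2, c.2.1), (c.2.1, c.1, c.2.2),
   (c.2.1, c.2.2, c.1), (c.2.2, c.1, c.2.1), (c.2.2, c.2.1, c.1)}

/-- The orbit average `π^S(i,j,k) = (1/#A((i,j,k))) ∑_{(s,t,u) ∈ A((i,j,k))} π(s,t,u)`. -/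
noncomputable def orbitAvg3 {r : ℕ} (π : Fin r × Fin r × Fin r → ℝ)
    (c : Fin r × Fin r × Fin r) : ℝ :=
  (∑ p ∈ A3 c, π p) / ((A3 c).card : ℝ)

lemma mem_A3_iff {r : ℕ} {p c : Fin r × Fin r × Fin r} :
    p ∈ A3 c ↔ p = (c.1, c.2.1, c.2.2) ∨ p = (c.1, c.2.2, c.2.1) ∨ p = (c.2.1, c.1, c.2.2) ∨
      p = (c.2.1, c.2.2, c.1) ∨ p = (c.2.2, c.1, c.2.1) ∨ p = (c.2.2, c.2.1, c.1) := by
  simp [A3]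

lemma self_mem_A3 {r : ℕ} (c : Fin r × Fin r × Fin r) : c ∈ A3 c := by
  obtain ⟨a, b, d⟩ := c; simp [A3]

lemma A3_eq_of_mem {r : ℕ} {p c : Fin r × Fin r × Fin r} (h : p ∈ A3 c) : A3 p = A3 c := by
  obtain ⟨a, b, d⟩ := c
  rw [mem_A3_iff] at h
  rcases h with rfl | rfl | rfl | rfl | rfl | rfl <;>
    · ext q; simp only [mem_A3_iff]; try tauto

lemma mem_A3_comm {r : ℕ} {p c : Fin r × Fin r × Fin r} : p ∈ A3 c ↔ c ∈ A3 p := by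
  constructor <;> intro h <;> rw [A3_eq_of_mem h] <;> exact self_mem_A3 _

lemma vecMul_apply {n m : Type*} [Fintype n] (w : n → ℝ) (M : Matrix n m ℝ) (j : m) :
    Matrix.vecMul w M j = ∑ i, w i * M i j := rfl

lemma A3_card_pos {r : ℕ} (c : Fin r × Fin r × Fin r) : (0 : ℝ) < ((A3 c).card : ℝ) := by
  exact_mod_cast Finset.card_pos.mpr ⟨c, self_mem_A3 c⟩

lemma deriv_entry {r : ℕ} (f : ℝ → ℝ)
    (hd2 : DifferentiableAt ℝ (deriv f) 1)
    (π : Fin r × Fin r × Fin r → ℝ) (hpos : ∀ c, 0 < π c)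
    (hS : ∀ c : Fin r × Fin r × Fin r, ∀ p ∈ A3 c, π p = π c)
    (c p : Fin r × Fin r × Fin r) :
    deriv (fun x : ℝ =>
        deriv f ((Function.update π p x) c / orbitAvg3 (Function.update π p x) c)) (π p)
      = deriv (deriv f) 1 *
        (((if p = c then 1 else 0) - (if p ∈ A3 c then 1 / ((A3 c).card : ℝ) else 0)) / π c) := by
  set N : ℝ := ((A3 c).card : ℝ) with hNdef
  have hNpos : 0 < N := by
    have : 0 < (A3 c).card := Finset.card_pos.mpr ⟨c, self_mem_A3 c⟩
    rw [hNdef]; exact_mod_cast this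
  have hSsum : ∑ q ∈ A3 c, π q = N * π c := by
    rw [Finset.sum_congr rfl (fun q hq => hS c q hq), Finset.sum_const, nsmul_eq_mul]
  by_cases hp : p ∈ A3 c
  · have hπpc : π p = π c := hS c p hp
    have hsum : ∀ x : ℝ, (∑ q ∈ A3 c, Function.update π p x q) = N * π c - π p + x := by
      intro x
      rw [Finset.sum_update_of_mem hp,
        Finset.sum_sdiff_eq_sub (Finset.singleton_subset_iff.mpr hp), Finset.sum_singleton,
        hSsum]
      ring
    have hfun : (fun x : ℝ =>
        deriv f ((Function.update π p x) c / orbitAvg3 (Function.update π p x) c))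
        = fun x : ℝ => deriv f ((if c = p then x else π c) / ((N * π c - π p + x) / N)) := by
      funext x
      rw [orbitAvg3, hsum, Function.update_apply]
    rw [hfun]
    have hnum : HasDerivAt (fun x : ℝ => if c = p then x else π c)
        (if p = c then 1 else 0) (π p) := by
      by_cases h : c = p
      · subst h
        simpa using hasDerivAt_id' (π c)
      · simp only [if_neg h, if_neg (fun hh : p = c => h hh.symm)]
        exact hasDerivAt_const _ _
    have hden : HasDerivAt (fun x : ℝ => (N * π c - π p + x) / N) (1 / N) (π p) :=
      ((hasDerivAt_id (π p)).const_add (N * π c - π p)).div_const N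
    have hdval : (N * π c - π p + π p) / N = π c := by field_simp; ring
    have hdenne : (N * π c - π p + π p) / N ≠ 0 := by rw [hdval]; exact (hpos c).ne'
    have hq := hnum.div hden hdenne
    have hnval : (if c = p then π p else π c) = π c := by split <;> simp [hπpc]
    have hval1 : (if c = p then π p else π c) / ((N * π c - π p + π p) / N) = 1 := by
      rw [hnval, hdval]; exact div_self (hpos c).ne'
    have hF : HasDerivAt (deriv f) (deriv (deriv f) 1)
        ((if c = p then π p else π c) / ((N * π c - π p + π p) / N)) := by
      rw [hval1]; exact hd2.hasDerivAt
    have hcomp := hF.comp (π p) hq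
    have hd := hcomp.deriv
    simp only [Function.comp_def, Pi.div_apply] at hd
    rw [hd]
    rw [hnval, hdval, if_pos hp]
    have hπcne : π c ≠ 0 := (hpos c).ne'
    have hNne : N ≠ 0 := hNpos.ne'
    congr 1
    rw [div_eq_div_iff (pow_ne_zero 2 hπcne) hπcne]
    ring
  · have hcp : c ≠ p := fun h => hp (h ▸ self_mem_A3 c)
    have hfun : (fun x : ℝ =>
        deriv f ((Function.update π p x) c / orbitAvg3 (Function.update π p x) c))
        = fun _ : ℝ => deriv f (π c / orbitAvg3 π c) := by
      funext x
      have h1 : Function.update π p x c = π c := Function.update_of_ne hcp x π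
      have h2 : ∀ q ∈ A3 c, Function.update π p x q = π q := by
        intro q hq
        exact Function.update_of_ne (fun (h : q = p) => hp (h ▸ hq)) x π
      rw [h1, orbitAvg3, orbitAvg3, Finset.sum_congr rfl h2]
    rw [hfun, deriv_const]
    rw [if_neg hp, if_neg (fun h : p = c => hp (by rw [h]; exact self_mem_A3 c))]
    simp

set_option maxHeartbeats 2000000 in
/-- Under complete symmetry, `H₁(π) Σ(π) H₂ᵀ(π)` vanishes: for any `v` orthogonal to the
span `S(X)` of the score contrasts `x₁, x₂` and the orbit indicators, one has
`vᵀ J Σ(π) Wᵀ = 0`, where `J` is the Jacobian at `π` of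
`G(π)(i,j,k) = F(π(i,j,k)/π^S(i,j,k))`, `Σ(π) = D(π) − π πᵀ`, and `W` has rows `x₁, x₂`. -/
theorem orthogonality_under_completeSymmetry
    (r : ℕ) (hr : 2 ≤ r)
    (u : Fin r → ℝ) (humono : Monotone u)
    (hune : u ⟨0, by omega⟩ < u ⟨r - 1, by omega⟩)
    (f : ℝ → ℝ) (hconv : StrictConvexOn ℝ (Set.Ioi 0) f) (hf1 : f 1 = 0)
    (hd1 : ∀ x ∈ Set.Ioi (0 : ℝ), DifferentiableAt ℝ f x)
    (hd2 : ∀ x ∈ Set.Ioi (0 : ℝ), DifferentiableAt ℝ (deriv f) x)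
    (π : Fin r × Fin r × Fin r → ℝ) (hpos : ∀ c, 0 < π c) (hsum : ∑ c, π c = 1)
    -- π satisfies complete symmetry:
    (hS : ∀ c : Fin r × Fin r × Fin r, ∀ p ∈ A3 c, π p = π c)
    -- J is the Jacobian matrix at π of the map G (entries are partial derivatives):
    (J : Matrix (Fin r × Fin r × Fin r) (Fin r × Fin r × Fin r) ℝ)
    (hJ : ∀ c p, J c p =
      deriv (fun x : ℝ =>
          deriv f ((Function.update π p x) c / orbitAvg3 (Function.update π p x) c))
        (π p))
    -- Σ(π) = D(π) − π πᵀ: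
    (Sig : Matrix (Fin r × Fin r × Fin r) (Fin r × Fin r × Fin r) ℝ)
    (hSig : ∀ c d, Sig c d = (if c = d then π c else 0) - π c * π d)
    -- W is the 2 × r³ matrix with rows x₁ and x₂:
    (W : Matrix (Fin 2) (Fin r × Fin r × Fin r) ℝ)
    (hW₁ : ∀ c : Fin r × Fin r × Fin r, W 0 c = u c.1 - u c.2.2)
    (hW₂ : ∀ c : Fin r × Fin r × Fin r, W 1 c = u c.2.1 - u c.2.2)
    -- v is orthogonal to S(X), the span of x₁, x₂ and the orbit indicator vectors:
    (v : Fin r × Fin r × Fin r → ℝ)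
    (hv : ∀ w ∈ Submodule.span ℝ
        (({fun c : Fin r × Fin r × Fin r => u c.1 - u c.2.2,
           fun c : Fin r × Fin r × Fin r => u c.2.1 - u c.2.2} :
             Set ((Fin r × Fin r × Fin r) → ℝ)) ∪
          Set.range (fun c₀ : Fin r × Fin r × Fin r =>
            fun c : Fin r × Fin r × Fin r => if c ∈ A3 c₀ then (1 : ℝ) else 0)),
      ∑ c, v c * w c = 0) :
    Matrix.vecMul v (J * Sig * W.transpose) = 0 := by
  have hJform : ∀ c p, J c p = deriv (deriv f) 1 *
      (((if p = c then 1 else 0) - (if p ∈ A3 c then 1 / ((A3 c).card : ℝ) else 0)) / π c) := by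
    intro c p
    rw [hJ c p]
    exact deriv_entry f (hd2 1 (by norm_num)) π hpos hS c p
  obtain ⟨K, hKeq⟩ : ∃ K : ℝ, K = deriv (deriv f) 1 := ⟨_, rfl⟩
  rw [← hKeq] at hJform
  -- orbit sums of v vanish
  have horb : ∀ c₀ : Fin r × Fin r × Fin r, ∑ c ∈ A3 c₀, v c = 0 := by
    intro c₀
    have hmem : (fun c : Fin r × Fin r × Fin r => if c ∈ A3 c₀ then (1 : ℝ) else 0) ∈
        Submodule.span ℝ
          (({fun c : Fin r × Fin r × Fin r => u c.1 - u c.2.2,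
             fun c : Fin r × Fin r × Fin r => u c.2.1 - u c.2.2} :
               Set ((Fin r × Fin r × Fin r) → ℝ)) ∪
            Set.range (fun c₀ : Fin r × Fin r × Fin r =>
              fun c : Fin r × Fin r × Fin r => if c ∈ A3 c₀ then (1 : ℝ) else 0)) :=
      Submodule.subset_span (Set.mem_union_right _ ⟨c₀, rfl⟩)
    have h := hv _ hmem
    simpa [mul_ite, Finset.sum_ite_mem] using h
  -- total sum of v vanishes
  have hsumv : ∑ c, v c = 0 := by
    have key : ∀ p : Fin r × Fin r × Fin r,
        ∑ c, (if p ∈ A3 c then v c / ((A3 c).card : ℝ) else 0) = 0 := by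
      intro p
      have : ∀ c : Fin r × Fin r × Fin r,
          (if p ∈ A3 c then v c / ((A3 c).card : ℝ) else 0)
            = (if c ∈ A3 p then v c / ((A3 p).card : ℝ) else 0) := by
        intro c
        by_cases h : p ∈ A3 c
        · rw [if_pos h, if_pos (mem_A3_comm.mp h), A3_eq_of_mem h]
        · rw [if_neg h, if_neg (fun hh => h (mem_A3_comm.mpr hh))]
      rw [Finset.sum_congr rfl (fun c _ => this c)]
      rw [Finset.sum_ite_mem, Finset.univ_inter, ← Finset.sum_div, horb p, zero_div]
    calc ∑ c, v c
        = ∑ c, ∑ p, (if p ∈ A3 c then v c / ((A3 c).card : ℝ) else 0) := by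
          refine Finset.sum_congr rfl fun c _ => ?_
          rw [Finset.sum_ite_mem, Finset.univ_inter, Finset.sum_const, nsmul_eq_mul,
            mul_div_cancel₀ _ (A3_card_pos c).ne']
      _ = ∑ p, ∑ c, (if p ∈ A3 c then v c / ((A3 c).card : ℝ) else 0) := Finset.sum_comm
      _ = 0 := by simp [key]
  -- first stage: vᵀ J
  have hw : Matrix.vecMul v J = fun p => K * v p / π p := by
    funext p
    have hterm : ∀ c, v c * J c p =
        (if c = p then K * v c / π c else 0)
          - (if c ∈ A3 p then K * v c / (((A3 p).card : ℝ) * π p) else 0) := by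
      intro c
      rw [hJform]
      by_cases h : p ∈ A3 c
      · have hπ : π c = π p := (hS c p h).symm
        have hA : A3 c = A3 p := (A3_eq_of_mem h).symm ▸ rfl
        rw [if_pos h, if_pos (mem_A3_comm.mp h), ← hA, ← hπ]
        by_cases hpc : p = c
        · rw [if_pos hpc, if_pos hpc.symm]
          field_simp
        · rw [if_neg hpc, if_neg (fun hh => hpc hh.symm)]
          field_simp
          ring
      · have hpc : p ≠ c := fun hh => h (hh ▸ self_mem_A3 c)
        rw [if_neg h, if_neg hpc, if_neg (fun hh : c = p => hpc hh.symm),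
          if_neg (fun hh => h (mem_A3_comm.mpr hh))]
        ring
    rw [vecMul_apply, Finset.sum_congr rfl (fun c _ => hterm c), Finset.sum_sub_distrib]
    rw [Finset.sum_ite_eq' Finset.univ p (fun c => K * v c / π c)]
    rw [Finset.sum_ite_mem, Finset.univ_inter]
    have : ∑ c ∈ A3 p, K * v c / (((A3 p).card : ℝ) * π p) = 0 := by
      rw [← Finset.sum_div, ← Finset.mul_sum, horb p, mul_zero, zero_div]
    rw [this, if_pos (Finset.mem_univ p), sub_zero]
  -- second stage: (vᵀ J) Σ
  have hws : Matrix.vecMul (Matrix.vecMul v J) Sig = fun d => K * v d := by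
    funext d
    rw [hw]
    rw [vecMul_apply]
    have hterm : ∀ p, (K * v p / π p) * Sig p d
        = (if p = d then K * v p else 0) - K * v p * π d := by
      intro p
      rw [hSig]
      by_cases h : p = d
      · rw [if_pos h, if_pos h]
        field_simp [(hpos p).ne']
      · rw [if_neg h, if_neg h]
        field_simp [(hpos p).ne']
        ring
    rw [Finset.sum_congr rfl (fun p _ => hterm p), Finset.sum_sub_distrib,
      Finset.sum_ite_eq' Finset.univ d (fun p => K * v p), if_pos (Finset.mem_univ d)]
    have : ∑ p, K * v p * π d = 0 := by
      rw [← Finset.sum_mul, ← Finset.mul_sum, hsumv, mul_zero, zero_mul]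
    rw [this, sub_zero]
  -- final stage
  rw [← Matrix.vecMul_vecMul, ← Matrix.vecMul_vecMul, hws]
  have hexp : ∀ i, Matrix.vecMul (fun d => K * v d) W.transpose i = K * ∑ d, v d * W i d := by
    intro i
    rw [vecMul_apply, Finset.mul_sum]
    exact Finset.sum_congr rfl fun d _ => by rw [Matrix.transpose_apply]; ring
  have h0 : ∑ d, v d * W 0 d = 0 := by
    simp only [hW₁]
    exact hv _ (Submodule.subset_span (Set.mem_union_left _ (Set.mem_insert _ _)))
  have h1 : ∑ d, v d * W 1 d = 0 := by
    simp only [hW₂]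
    exact hv _ (Submodule.subset_span (Set.mem_union_left _ (Set.mem_insert_of_mem _ rfl)))
  funext i
  fin_cases i
  · show Matrix.vecMul (fun d => K * v d) W.transpose 0 = (0 : Fin 2 → ℝ) 0
    rw [hexp 0, h0, mul_zero, Pi.zero_apply]
  · show Matrix.vecMul (fun d => K * v d) W.transpose 1 = (0 : Fin 2 → ℝ) 1
    rw [hexp 1, h1, mul_zero, Pi.zero_apply]
end
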